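/- Let f = (f₁, f₂) : ℝ² → ℝ² be a C¹ vector field that is tangent to the cusp E¹ = {(x,y) ∈ ℝ² : y² = x³, x ≠ 0}, in the sense that for every t ∈ ℝ \ {0} the vector f(t², t³) is parallel to the tangent vector (2t, 3t²) of the cusp at (t², t³), i.e., 3t·f₁(t², t³) = 2·f₂(t², t³). Then f vanishes at the origin: f(0,0) = (0,0). -/

import Mathlib

/-- A `C¹` vector field `f = (f₁, f₂)` on `ℝ²` that is tangent to the
cusp `{(x,y) : y² = x³, x ≠ 0}` — i.e., at each point `(t², t³)` (`t ≠ 0`) the vector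
`f(t², t³)` is parallel to the tangent direction `(2t, 3t²)`, equivalently
`3t·f₁(t², t³) = 2·f₂(t², t³)` — must vanish at the origin. -/
theorem tangent_to_cusp_vanishes_at_origin
    (f : ℝ × ℝ → ℝ × ℝ) (hf : ContDiff ℝ 1 f)
    (htan : ∀ t : ℝ, t ≠ 0 →
      3 * t * (f (t ^ 2, t ^ 3)).1 = 2 * (f (t ^ 2, t ^ 3)).2) :
    f (0, 0) = (0, 0) := by
  have hc : Continuous f := hf.continuous
  have hφ : Continuous (fun t : ℝ => ((t ^ 2, t ^ 3) : ℝ × ℝ)) := by continuity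
  have hF1 : Continuous (fun t : ℝ => (f (t ^ 2, t ^ 3)).1) :=
    continuous_fst.comp (hc.comp hφ)
  have hF2 : Continuous (fun t : ℝ => (f (t ^ 2, t ^ 3)).2) :=
    continuous_snd.comp (hc.comp hφ)
  have hT1 : Filter.Tendsto (fun t : ℝ => (f (t ^ 2, t ^ 3)).1) (nhds 0)
      (nhds ((f (0, 0)).1)) := by
    have := hF1.tendsto 0
    norm_num at this
    exact this
  have hT2 : Filter.Tendsto (fun t : ℝ => (f (t ^ 2, t ^ 3)).2) (nhds 0)
      (nhds ((f (0, 0)).2)) := by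
    have := hF2.tendsto 0
    norm_num at this
    exact this
  -- f₂(0,0) = 0
  have h2 : (f (0, 0)).2 = 0 := by
    have hlim1 : Filter.Tendsto (fun t : ℝ => 3 * t * (f (t ^ 2, t ^ 3)).1) (nhdsWithin 0 {0}ᶜ)
        (nhds 0) := by
      have : Filter.Tendsto (fun t : ℝ => 3 * t * (f (t ^ 2, t ^ 3)).1) (nhds 0)
          (nhds (3 * 0 * (f (0, 0)).1)) :=
        (((continuous_const.mul continuous_id).tendsto' 0 (3 * 0) (by norm_num)).mul hT1)
      simpa using this.mono_left nhdsWithin_le_nhds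
    have hlim2 : Filter.Tendsto (fun t : ℝ => 3 * t * (f (t ^ 2, t ^ 3)).1) (nhdsWithin 0 {0}ᶜ)
        (nhds (2 * (f (0, 0)).2)) := by
      have h : Filter.Tendsto (fun t : ℝ => 2 * (f (t ^ 2, t ^ 3)).2) (nhdsWithin 0 {0}ᶜ)
          (nhds (2 * (f (0, 0)).2)) := (hT2.const_mul 2).mono_left nhdsWithin_le_nhds
      refine h.congr' ?_
      filter_upwards [self_mem_nhdsWithin] with t ht using (htan t ht).symm
    have h0 : (2 : ℝ) * (f (0, 0)).2 = 0 := tendsto_nhds_unique hlim2 hlim1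
    linarith
  have h2' : (f 0).2 = 0 := h2
  -- derivative of g(t) = f₂(t²,t³) at 0 is 0
  have hφd : HasDerivAt (fun t : ℝ => ((t ^ 2, t ^ 3) : ℝ × ℝ)) ((0 : ℝ), (0 : ℝ)) 0 := by
    have h1 : HasDerivAt (fun t : ℝ => t ^ 2) 0 0 := by
      simpa using (hasDerivAt_pow 2 (0 : ℝ))
    have h3 : HasDerivAt (fun t : ℝ => t ^ 3) 0 0 := by
      simpa using (hasDerivAt_pow 3 (0 : ℝ))
    exact h1.prodMk h3
  have hfd : HasFDerivAt f (fderiv ℝ f (0, 0)) (((0 : ℝ) ^ 2, (0 : ℝ) ^ 3)) := by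
    have : (((0 : ℝ) ^ 2, (0 : ℝ) ^ 3) : ℝ × ℝ) = (0, 0) := by norm_num
    rw [this]
    exact (hf.differentiable one_ne_zero (0, 0)).hasFDerivAt
  have hFd : HasDerivAt (fun t : ℝ => f (t ^ 2, t ^ 3)) ((fderiv ℝ f (0, 0)) ((0 : ℝ), (0 : ℝ))) 0 :=
    hfd.comp_hasDerivAt 0 hφd
  have hzero : (fderiv ℝ f (0, 0)) ((0 : ℝ), (0 : ℝ)) = 0 := by
    have : ((0 : ℝ), (0 : ℝ)) = (0 : ℝ × ℝ) := rfl
    rw [this, map_zero]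
  rw [hzero] at hFd
  have hgd : HasDerivAt (fun t : ℝ => (f (t ^ 2, t ^ 3)).2) 0 0 := by
    exact hasFDerivAt_snd.comp_hasDerivAt 0 hFd
  have hslope := hasDerivAt_iff_tendsto_slope.mp hgd
  have hslope' : Filter.Tendsto (fun t : ℝ => (f (t ^ 2, t ^ 3)).2 / t) (nhdsWithin 0 {0}ᶜ)
      (nhds 0) := by
    refine hslope.congr' ?_
    filter_upwards [self_mem_nhdsWithin] with t ht
    rw [slope_def_field]
    norm_num [h2', h2]
  -- f₁(t²,t³) = (2/3) * (g t / t) for t ≠ 0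
  have hlim1 : Filter.Tendsto (fun t : ℝ => (f (t ^ 2, t ^ 3)).1) (nhdsWithin 0 {0}ᶜ)
      (nhds 0) := by
    have h : Filter.Tendsto (fun t : ℝ => (2 / 3 : ℝ) * ((f (t ^ 2, t ^ 3)).2 / t))
        (nhdsWithin 0 {0}ᶜ) (nhds 0) := by
      simpa using hslope'.const_mul (2 / 3 : ℝ)
    refine h.congr' ?_
    filter_upwards [self_mem_nhdsWithin] with t ht
    have h := htan t ht
    have ht' : (t : ℝ) ≠ 0 := ht
    field_simp
    linear_combination -h
  have hlim2 : Filter.Tendsto (fun t : ℝ => (f (t ^ 2, t ^ 3)).1) (nhdsWithin 0 {0}ᶜ)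
      (nhds ((f (0, 0)).1)) := hT1.mono_left nhdsWithin_le_nhds
  have h1 : (f (0, 0)).1 = 0 := tendsto_nhds_unique hlim2 hlim1
  exact Prod.ext h1 h2
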